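/- arXiv:1102.3947 — 2 statements merged into one kernel-verified Lean document; each statement's English description precedes it below -/
import Mathlib

section
/- (Weyl's inequality, upper form) For Hermitian n x n matrices A and B and indices i <= j, \lambda_j(A+B) <= \lambda_i(A) + \lambda_{j-i+1}(B), where \lambda_k denotes the k-th largest eigenvalue. -/
open Matrix

/-- The eigenvalues of a Hermitian matrix, sorted in decreasing order:
`eigDesc hA ⟨0, _⟩` is the largest eigenvalue. -/
noncomputable def eigDesc {n : ℕ} {A : Matrix (Fin n) (Fin n) ℝ} (hA : A.IsHermitian) :
    Fin n → ℝ :=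
  fun i => (hA.eigenvalues ∘ Tuple.sort hA.eigenvalues) i.rev

section aux
open RealInnerProductSpace Finset Submodule

variable {n : ℕ}

private lemma inner_sum_sum (v : Fin n → EuclideanSpace ℝ (Fin n)) (hv : Orthonormal ℝ v)
    (s : Finset (Fin n)) (c d : Fin n → ℝ) :
    ⟪(∑ k ∈ s, c k • v k), (∑ k ∈ s, d k • v k)⟫ = ∑ k ∈ s, c k * d k := by
  simp_rw [sum_inner, inner_sum, real_inner_smul_left, real_inner_smul_right,
    orthonormal_iff_ite.mp hv]
  simp [Finset.mul_sum, mul_ite]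

private lemma quad_le (M : Matrix (Fin n) (Fin n) ℝ) (v : Fin n → EuclideanSpace ℝ (Fin n))
    (hv : Orthonormal ℝ v) (μ : Fin n → ℝ)
    (hMv : ∀ k, M *ᵥ (v k : Fin n → ℝ) = μ k • (v k : Fin n → ℝ))
    (s : Finset (Fin n)) (c : ℝ) (hμ : ∀ k ∈ s, μ k ≤ c)
    (x : EuclideanSpace ℝ (Fin n)) (hx : x ∈ span ℝ (v '' s)) :
    ⟪x, (WithLp.toLp 2 (M *ᵥ x) : EuclideanSpace ℝ (Fin n))⟫ ≤ c * ⟪x, x⟫ := by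
  classical
  have hinj : Function.Injective v := hv.linearIndependent.injective
  rw [show (v '' (s : Set (Fin n))) = ↑(s.image v) from (Finset.coe_image).symm] at hx
  obtain ⟨f, hf⟩ := mem_span_finset.mp hx
  rw [Finset.sum_image (fun a _ b _ h => hinj h)] at hf
  set a : Fin n → ℝ := fun k => f (v k) with ha
  have hx' : x = ∑ k ∈ s, a k • v k := hf.2.symm
  have hMx : (WithLp.toLp 2 (M *ᵥ x) : EuclideanSpace ℝ (Fin n))
      = ∑ k ∈ s, (a k * μ k) • v k := by
    rw [hx']
    rw [WithLp.ofLp_sum, Matrix.mulVec_sum, WithLp.toLp_sum]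
    refine Finset.sum_congr rfl fun k _ => ?_
    rw [WithLp.ofLp_smul, Matrix.mulVec_smul, hMv k, smul_smul, WithLp.toLp_smul, WithLp.toLp_ofLp]
  rw [hMx, hx', inner_sum_sum v hv, inner_sum_sum v hv, Finset.mul_sum]
  refine Finset.sum_le_sum fun k hk => ?_
  have h1 : a k * a k ≥ 0 := mul_self_nonneg _
  have := hμ k hk
  nlinarith

private lemma quad_ge (M : Matrix (Fin n) (Fin n) ℝ) (v : Fin n → EuclideanSpace ℝ (Fin n))
    (hv : Orthonormal ℝ v) (μ : Fin n → ℝ)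
    (hMv : ∀ k, M *ᵥ (v k : Fin n → ℝ) = μ k • (v k : Fin n → ℝ))
    (s : Finset (Fin n)) (c : ℝ) (hμ : ∀ k ∈ s, c ≤ μ k)
    (x : EuclideanSpace ℝ (Fin n)) (hx : x ∈ span ℝ (v '' s)) :
    c * ⟪x, x⟫ ≤ ⟪x, (WithLp.toLp 2 (M *ᵥ x) : EuclideanSpace ℝ (Fin n))⟫ := by
  have h := quad_le (-M) v hv (-μ) (fun k => by
      rw [Matrix.neg_mulVec, hMv k, Pi.neg_apply, neg_smul]) s (-c)
    (fun k hk => neg_le_neg (hμ k hk)) x hx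
  have h2 : ((WithLp.toLp 2 ((-M) *ᵥ x)) : EuclideanSpace ℝ (Fin n))
      = -((WithLp.toLp 2 (M *ᵥ x)) : EuclideanSpace ℝ (Fin n)) := by
    rw [Matrix.neg_mulVec, WithLp.toLp_neg]
  rw [h2, inner_neg_right, neg_mul] at h
  linarith

/-- the orthonormal eigenbasis indexed so that eigenvalues are decreasing -/
private noncomputable def gvec {M : Matrix (Fin n) (Fin n) ℝ} (hM : M.IsHermitian) :
    Fin n → EuclideanSpace ℝ (Fin n) :=
  fun k => hM.eigenvectorBasis (Tuple.sort hM.eigenvalues k.rev)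

private lemma gvec_orthonormal {M : Matrix (Fin n) (Fin n) ℝ} (hM : M.IsHermitian) :
    Orthonormal ℝ (gvec hM) :=
  hM.eigenvectorBasis.orthonormal.comp _
    ((Tuple.sort hM.eigenvalues).injective.comp Fin.rev_injective)

private lemma gvec_eigen {M : Matrix (Fin n) (Fin n) ℝ} (hM : M.IsHermitian) (k : Fin n) :
    M *ᵥ (gvec hM k : Fin n → ℝ) = eigDesc hM k • (gvec hM k : Fin n → ℝ) :=
  hM.mulVec_eigenvectorBasis _

private lemma eigDesc_antitone {M : Matrix (Fin n) (Fin n) ℝ} (hM : M.IsHermitian) :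
    Antitone (eigDesc hM) := fun k l hkl =>
  Tuple.monotone_sort hM.eigenvalues (Fin.rev_le_rev.mpr hkl)

private lemma finrank_span_gvec {M : Matrix (Fin n) (Fin n) ℝ} (hM : M.IsHermitian)
    (s : Finset (Fin n)) :
    Module.finrank ℝ (span ℝ (gvec hM '' s)) = s.card := by
  have hinj : Function.Injective (gvec hM) :=
    (gvec_orthonormal hM).linearIndependent.injective
  have hli : LinearIndependent ℝ ((↑) : (gvec hM '' (s : Set (Fin n))) → EuclideanSpace ℝ (Fin n)) :=
    ((linearIndepOn_id_range_iff hinj).mpr (gvec_orthonormal hM).linearIndependent).mono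
      (Set.image_subset_range _ _)
  classical
  have hset : gvec hM '' (s : Set (Fin n)) = ↑(s.image (gvec hM)) := (Finset.coe_image).symm
  rw [hset] at hli ⊢
  rw [finrank_span_finset_eq_card hli, Finset.card_image_of_injective _ hinj]

end aux

/-- Weyl's inequality (upper form), with 0-based indices: for `i ≤ j`,
`λ_j(A+B) ≤ λ_i(A) + λ_{j-i}(B)`. -/
theorem weyl_upper {n : ℕ} {A B : Matrix (Fin n) (Fin n) ℝ}
    (hA : A.IsHermitian) (hB : B.IsHermitian) (i j : Fin n) (hij : i ≤ j) :
    eigDesc (hA.add hB) j ≤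
      eigDesc hA i + eigDesc hB ⟨j.val - i.val, lt_of_le_of_lt (Nat.sub_le _ _) j.isLt⟩ := by
  classical
  open RealInnerProductSpace Submodule Module in
  set hAB := hA.add hB with hhAB
  set i' : Fin n := ⟨j.val - i.val, lt_of_le_of_lt (Nat.sub_le _ _) j.isLt⟩ with hi'
  set S1 := span ℝ (gvec hA '' (Finset.Ici i)) with hS1
  set S2 := span ℝ (gvec hB '' (Finset.Ici i')) with hS2
  set S3 := span ℝ (gvec hAB '' (Finset.Iic j)) with hS3
  have d1 : finrank ℝ S1 = n - i.val := by rw [hS1, finrank_span_gvec, Fin.card_Ici]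
  have d2 : finrank ℝ S2 = n - (j.val - i.val) := by rw [hS2, finrank_span_gvec, Fin.card_Ici]
  have d3 : finrank ℝ S3 = j.val + 1 := by rw [hS3, finrank_span_gvec, Fin.card_Iic]
  have key : ∀ S T : Submodule ℝ (EuclideanSpace ℝ (Fin n)),
      finrank ℝ S + finrank ℝ T ≤ n + finrank ℝ (S ⊓ T : Submodule ℝ _) := by
    intro S T
    have h1 := Submodule.finrank_sup_add_finrank_inf_eq S T
    have h2 : finrank ℝ (S ⊔ T : Submodule ℝ _) ≤ n := by
      simpa [finrank_euclideanSpace_fin] using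
        Submodule.finrank_le (S ⊔ T : Submodule ℝ (EuclideanSpace ℝ (Fin n)))
    omega
  have h12 := key S1 S2
  have h123 := key (S1 ⊓ S2) S3
  have hjn : j.val < n := j.isLt
  have hijv : i.val ≤ j.val := hij
  have hr : 0 < finrank ℝ (S1 ⊓ S2 ⊓ S3 : Submodule ℝ _) := by omega
  haveI := Module.finrank_pos_iff.mp hr
  obtain ⟨y, hy0⟩ := exists_ne (0 : (S1 ⊓ S2 ⊓ S3 : Submodule ℝ (EuclideanSpace ℝ (Fin n))))
  set x : EuclideanSpace ℝ (Fin n) := (y : EuclideanSpace ℝ (Fin n)) with hx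
  have hx0 : x ≠ 0 := fun h => hy0 (Subtype.ext h)
  have hxm := y.2
  rw [Submodule.mem_inf, Submodule.mem_inf] at hxm
  have q1 : ⟪x, (WithLp.toLp 2 (A *ᵥ x) : EuclideanSpace ℝ (Fin n))⟫ ≤ eigDesc hA i * ⟪x, x⟫ :=
    quad_le A (gvec hA) (gvec_orthonormal hA) (eigDesc hA) (gvec_eigen hA) (Finset.Ici i)
      (eigDesc hA i) (fun k hk => eigDesc_antitone hA (Finset.mem_Ici.mp hk)) x hxm.1.1
  have q2 : ⟪x, (WithLp.toLp 2 (B *ᵥ x) : EuclideanSpace ℝ (Fin n))⟫ ≤ eigDesc hB i' * ⟪x, x⟫ :=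
    quad_le B (gvec hB) (gvec_orthonormal hB) (eigDesc hB) (gvec_eigen hB) (Finset.Ici i')
      (eigDesc hB i') (fun k hk => eigDesc_antitone hB (Finset.mem_Ici.mp hk)) x hxm.1.2
  have q3 : eigDesc hAB j * ⟪x, x⟫ ≤ ⟪x, (WithLp.toLp 2 ((A + B) *ᵥ x) : EuclideanSpace ℝ (Fin n))⟫ :=
    quad_ge (A + B) (gvec hAB) (gvec_orthonormal hAB) (eigDesc hAB) (gvec_eigen hAB)
      (Finset.Iic j) (eigDesc hAB j) (fun k hk => eigDesc_antitone hAB (Finset.mem_Iic.mp hk))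
      x hxm.2
  have hsplit : (WithLp.toLp 2 ((A + B) *ᵥ x) : EuclideanSpace ℝ (Fin n))
      = (WithLp.toLp 2 (A *ᵥ x) : EuclideanSpace ℝ (Fin n))
        + (WithLp.toLp 2 (B *ᵥ x) : EuclideanSpace ℝ (Fin n)) := by rw [Matrix.add_mulVec, WithLp.toLp_add]
  rw [hsplit, inner_add_right] at q3
  have hpos : (0:ℝ) < ⟪x, x⟫ := by
    rw [real_inner_self_eq_norm_sq]
    exact pow_pos (norm_pos_iff.mpr hx0) 2
  nlinarith [q1, q2, q3, hpos]
end

section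
/- Let A be a linear operator on n x n symmetric matrices mapping PSD to PSD, and let r >= 1. Then every PSD matrix X of rank at most r is the unique PSD solution of A(Y) = A(X) if and only if every nonzero symmetric matrix W in the null space of A has at least r+1 negative eigenvalues. -/
open Matrix BigOperators

/-- The number of negative eigenvalues (with multiplicity) of a Hermitian matrix. -/
noncomputable def negEigCount {n : ℕ} {W : Matrix (Fin n) (Fin n) ℝ}
    (hW : W.IsHermitian) : ℕ :=
  (Finset.univ.filter fun i => hW.eigenvalues i < 0).card

section Aux

variable {n : ℕ} {W : Matrix (Fin n) (Fin n) ℝ} (hW : W.IsHermitian)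

noncomputable def evec (hW : W.IsHermitian) (i : Fin n) : Fin n → ℝ :=
  fun k => (hW.eigenvectorUnitary : Matrix (Fin n) (Fin n) ℝ) k i

lemma evec_ortho (i j : Fin n) : evec hW i ⬝ᵥ evec hW j = if i = j then 1 else 0 := by
  have h : (star (hW.eigenvectorUnitary : Matrix (Fin n) (Fin n) ℝ) *
      (hW.eigenvectorUnitary : Matrix (Fin n) (Fin n) ℝ)) i j = (1 : Matrix (Fin n) (Fin n) ℝ) i j := by
    rw [Unitary.coe_star_mul_self]
  simpa [Matrix.mul_apply, Matrix.one_apply, evec, dotProduct, star_apply,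
    Matrix.conjTranspose_apply] using h

lemma mulVec_evec (j : Fin n) : W *ᵥ evec hW j = hW.eigenvalues j • evec hW j := by
  have h := hW.mulVec_eigenvectorBasis j
  have he : evec hW j = ⇑(hW.eigenvectorBasis j) := by
    funext k; exact hW.eigenvectorUnitary_apply k j
  rw [he]; exact h

lemma W_entry (a b : Fin n) :
    W a b = ∑ i, hW.eigenvalues i * (evec hW i a * evec hW i b) := by
  conv_lhs => rw [hW.spectral_theorem, Unitary.conjStarAlgAut_apply]
  simp only [Matrix.mul_apply, Matrix.diagonal_apply, Function.comp_apply, evec,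
    Matrix.conjTranspose_apply, star_apply]
  simp only [Finset.sum_ite_eq', Finset.mem_univ, if_true, RCLike.star_def]
  refine Finset.sum_congr rfl fun i _ => ?_
  simp [Matrix.IsHermitian.eigenvectorUnitary_apply]
  ring

lemma dp_sum_left {ι : Type*} (s : Finset ι) (f : ι → Fin n → ℝ) (w : Fin n → ℝ) :
    (∑ i ∈ s, f i) ⬝ᵥ w = ∑ i ∈ s, f i ⬝ᵥ w := by
  simp [dotProduct, Finset.sum_apply, Finset.sum_mul]
  exact Finset.sum_comm

lemma dp_sum_right {ι : Type*} (s : Finset ι) (f : ι → Fin n → ℝ) (w : Fin n → ℝ) :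
    w ⬝ᵥ (∑ i ∈ s, f i) = ∑ i ∈ s, w ⬝ᵥ f i := by
  simp [dotProduct, Finset.sum_apply, Finset.mul_sum]
  exact Finset.sum_comm

lemma mulVec_sum' {ι : Type*} (s : Finset ι) (M : Matrix (Fin n) (Fin n) ℝ)
    (f : ι → Fin n → ℝ) : M *ᵥ (∑ i ∈ s, f i) = ∑ i ∈ s, M *ᵥ f i := by
  have := map_sum M.mulVecLin f s
  simpa only [Matrix.mulVecLin_apply] using this

lemma quad_eval {S : Finset (Fin n)} (c : {i // i ∈ S} → ℝ) :
    (∑ i : {i // i ∈ S}, c i • evec hW i) ⬝ᵥ (W *ᵥ ∑ i : {i // i ∈ S}, c i • evec hW i)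
      = ∑ i : {i // i ∈ S}, hW.eigenvalues i * c i ^ 2 := by
  have h1 : W *ᵥ (∑ i : {i // i ∈ S}, c i • evec hW i)
      = ∑ i : {i // i ∈ S}, (c i * hW.eigenvalues i) • evec hW i := by
    rw [show (∑ i : {i // i ∈ S}, c i • evec hW i) = ∑ i : {i // i ∈ S}, (fun i : {i // i ∈ S} => c i • evec hW (i : Fin n)) i from rfl,
      mulVec_sum']
    refine Finset.sum_congr rfl fun i _ => ?_
    rw [Matrix.mulVec_smul, mulVec_evec, smul_smul, mul_comm]
  rw [h1, dp_sum_left]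
  refine Finset.sum_congr rfl fun i _ => ?_
  rw [dp_sum_right]
  have : ∀ j : {i // i ∈ S}, (c i • evec hW i) ⬝ᵥ ((c j * hW.eigenvalues j) • evec hW j)
      = (c i * (c j * hW.eigenvalues j)) * (evec hW i ⬝ᵥ evec hW j) := by
    intro j
    rw [smul_dotProduct, dotProduct_smul]
    simp [mul_assoc]
  simp_rw [this, evec_ortho hW]
  have h2 : ∀ j : {i // i ∈ S},
      (c i * (c j * hW.eigenvalues j) * if (i : Fin n) = (j : Fin n) then 1 else 0)
        = if i = j then hW.eigenvalues i * c i ^ 2 else 0 := by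
    intro j
    by_cases h : i = j
    · subst h; simp; ring
    · have : ¬ ((i : Fin n) = (j : Fin n)) := fun hc => h (Subtype.ext hc)
      simp [h, this]
  rw [Finset.sum_congr rfl fun j _ => h2 j]
  simp


lemma aux1 {X : Matrix (Fin n) (Fin n) ℝ}
    (hX : X.PosSemidef) (hWX : (W + X).PosSemidef) :
    negEigCount hW ≤ X.rank := by
  classical
  set S : Finset (Fin n) := Finset.univ.filter (fun i => hW.eigenvalues i < 0) with hSdef
  set L : ({i // i ∈ S} → ℝ) →ₗ[ℝ] (Fin n → ℝ) :=
    Fintype.linearCombination ℝ (fun i : {i // i ∈ S} => evec hW i) with hLdef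
  have hLapp : ∀ c, L c = ∑ i : {i // i ∈ S}, c i • evec hW i := fun c =>
    Fintype.linearCombination_apply ℝ _ c
  have hker : ∀ c, X.mulVecLin (L c) = 0 → c = 0 := by
    intro c hc
    rw [Matrix.mulVecLin_apply] at hc
    have hx0 : X *ᵥ L c = 0 := hc
    have hstar : star (L c) = L c := by
      funext k; simp
    have h1 : 0 ≤ (L c) ⬝ᵥ (W *ᵥ L c) := by
      have := hWX.dotProduct_mulVec_nonneg (L c)
      rw [hstar, Matrix.add_mulVec, hx0] at this
      simpa using this
    rw [hLapp, quad_eval hW c] at h1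
    have hterm : ∀ i : {i // i ∈ S}, hW.eigenvalues i * c i ^ 2 ≤ 0 := by
      intro i
      have hneg : hW.eigenvalues (i : Fin n) < 0 := by
        have h := i.2
        simp only [hSdef, Finset.mem_filter] at h
        exact h.2
      exact mul_nonpos_of_nonpos_of_nonneg hneg.le (sq_nonneg _)
    have hsum0 : ∑ i : {i // i ∈ S}, hW.eigenvalues i * c i ^ 2 = 0 :=
      le_antisymm (Finset.sum_nonpos fun i _ => hterm i) h1
    have hall : ∀ i : {i // i ∈ S}, hW.eigenvalues i * c i ^ 2 = 0 := by
      intro i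
      have := (Finset.sum_eq_zero_iff_of_nonpos (fun i _ => hterm i)).mp hsum0
      exact this i (Finset.mem_univ i)
    funext i
    have hneg : hW.eigenvalues (i : Fin n) < 0 := by
      have h := i.2
      simp only [hSdef, Finset.mem_filter] at h
      exact h.2
    have := hall i
    have hc2 : c i ^ 2 = 0 := by
      rcases mul_eq_zero.mp this with h | h
      · exact absurd h hneg.ne
      · exact h
    exact pow_eq_zero_iff (by norm_num) |>.mp hc2
  have hinj : Function.Injective (X.mulVecLin ∘ₗ L) := by
    rw [← LinearMap.ker_eq_bot, LinearMap.ker_eq_bot']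
    intro c hc
    exact hker c hc
  set φ : ({i // i ∈ S} → ℝ) →ₗ[ℝ] (LinearMap.range X.mulVecLin) :=
    (X.mulVecLin ∘ₗ L).codRestrict (LinearMap.range X.mulVecLin)
      (fun c => ⟨L c, rfl⟩) with hφdef
  have hφinj : Function.Injective φ := by
    intro a b hab
    apply hinj
    have : ((φ a : Fin n → ℝ)) = (φ b : Fin n → ℝ) := by rw [hab]
    simpa [hφdef, LinearMap.codRestrict] using this
  have hcard : negEigCount hW = Module.finrank ℝ ({i // i ∈ S} → ℝ) := by
    rw [Module.finrank_fintype_fun_eq_card, Fintype.card_coe]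
    rfl
  rw [hcard]
  have := LinearMap.finrank_le_finrank_of_injective hφinj
  exact this.trans_eq rfl

lemma vmv_mulVec (v x : Fin n → ℝ) : vecMulVec v v *ᵥ x = (v ⬝ᵥ x) • v := by
  funext a
  simp only [Matrix.mulVec, vecMulVec_apply, dotProduct, Pi.smul_apply, smul_eq_mul,
    Finset.mul_sum]
  rw [Finset.sum_mul]
  exact Finset.sum_congr rfl fun j _ => by ring

lemma sum_mulVec' {ι : Type*} (s : Finset ι) (M : ι → Matrix (Fin n) (Fin n) ℝ)
    (x : Fin n → ℝ) : (∑ i ∈ s, M i) *ᵥ x = ∑ i ∈ s, M i *ᵥ x := by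
  funext a
  simp only [Matrix.mulVec, dotProduct, Matrix.sum_apply, Finset.sum_mul, Finset.sum_apply]
  exact Finset.sum_comm

lemma smulvmv_mulVec_sum (s : Finset (Fin n)) (v : Fin n → Fin n → ℝ) (d : Fin n → ℝ)
    (x : Fin n → ℝ) : (∑ i ∈ s, d i • vecMulVec (v i) (v i)) *ᵥ x
      = ∑ i ∈ s, (d i * (v i ⬝ᵥ x)) • v i := by
  rw [sum_mulVec']
  exact Finset.sum_congr rfl fun i _ => by
    rw [Matrix.smul_mulVec, vmv_mulVec, smul_smul]

lemma psd_sum (s : Finset (Fin n)) (v : Fin n → Fin n → ℝ) (d : Fin n → ℝ)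
    (hd : ∀ i ∈ s, 0 ≤ d i) :
    (∑ i ∈ s, d i • vecMulVec (v i) (v i)).PosSemidef := by
  refine Matrix.PosSemidef.of_dotProduct_mulVec_nonneg ?_ ?_
  · show _ = _
    rw [conjTranspose_eq_transpose_of_trivial, Matrix.transpose_sum]
    refine Finset.sum_congr rfl fun i _ => ?_
    rw [Matrix.transpose_smul]
    congr 1
    ext a b
    simp [vecMulVec_apply, mul_comm]
  · intro x
    rw [smulvmv_mulVec_sum]
    have hsx : star x = x := by funext k; simp
    rw [hsx, dp_sum_right]
    refine Finset.sum_nonneg fun i hi => ?_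
    rw [dotProduct_smul, smul_eq_mul, dotProduct_comm x (v i)]
    calc (0:ℝ) ≤ d i * ((v i ⬝ᵥ x) * (v i ⬝ᵥ x)) :=
          mul_nonneg (hd i hi) (mul_self_nonneg _)
      _ = d i * (v i ⬝ᵥ x) * (v i ⬝ᵥ x) := by ring

lemma rank_sum_le (s : Finset (Fin n)) (v : Fin n → Fin n → ℝ) (d : Fin n → ℝ) :
    (∑ i ∈ s, d i • vecMulVec (v i) (v i)).rank ≤ s.card := by
  classical
  set M := ∑ i ∈ s, d i • vecMulVec (v i) (v i) with hM
  have hrange : LinearMap.range M.mulVecLin ≤ Submodule.span ℝ ((s.image v : Finset (Fin n → ℝ)) : Set (Fin n → ℝ)) := by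
    rintro y ⟨x, rfl⟩
    rw [Matrix.mulVecLin_apply, hM, smulvmv_mulVec_sum]
    refine Submodule.sum_mem _ fun i hi => ?_
    exact Submodule.smul_mem _ _ (Submodule.subset_span (by
      simp only [Finset.coe_image, Set.mem_image, Finset.mem_coe]
      exact ⟨i, hi, rfl⟩))
  calc M.rank = Module.finrank ℝ (LinearMap.range M.mulVecLin) := rfl
    _ ≤ Module.finrank ℝ (Submodule.span ℝ ((s.image v : Finset (Fin n → ℝ)) : Set (Fin n → ℝ))) :=
        Submodule.finrank_mono hrange
    _ ≤ (s.image v).card := finrank_span_finset_le_card _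
    _ ≤ s.card := Finset.card_image_le

lemma decomp :
    W + (∑ i ∈ Finset.univ.filter (fun i => hW.eigenvalues i < 0),
        (-hW.eigenvalues i) • vecMulVec (evec hW i) (evec hW i))
      = ∑ i ∈ Finset.univ.filter (fun i => ¬ hW.eigenvalues i < 0),
        hW.eigenvalues i • vecMulVec (evec hW i) (evec hW i) := by
  ext a b
  simp only [Matrix.add_apply, Matrix.sum_apply, Matrix.smul_apply, vecMulVec_apply,
    smul_eq_mul]
  rw [W_entry hW a b]
  have h := Finset.sum_filter_add_sum_filter_not Finset.univ (fun i => hW.eigenvalues i < 0)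
    (fun i => hW.eigenvalues i * (evec hW i a * evec hW i b))
  have h2 : ∑ i ∈ Finset.univ.filter (fun i => hW.eigenvalues i < 0),
      -hW.eigenvalues i * (evec hW i a * evec hW i b)
    = -∑ i ∈ Finset.univ.filter (fun i => hW.eigenvalues i < 0),
      hW.eigenvalues i * (evec hW i a * evec hW i b) := by
    rw [← Finset.sum_neg_distrib]
    exact Finset.sum_congr rfl fun i _ => by ring
  rw [h2]
  linarith [h]

end Aux

theorem psd_unique_iff_nullspace_negative_eigenvalues {n m r : ℕ} (hr : 1 ≤ r)
    (A : Matrix (Fin n) (Fin n) ℝ →ₗ[ℝ] Matrix (Fin m) (Fin m) ℝ)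
    (hpsd : ∀ X : Matrix (Fin n) (Fin n) ℝ, X.PosSemidef → (A X).PosSemidef) :
    (∀ X : Matrix (Fin n) (Fin n) ℝ, X.PosSemidef → X.rank ≤ r →
      ∀ Y : Matrix (Fin n) (Fin n) ℝ, Y.PosSemidef → A Y = A X → Y = X) ↔
    (∀ W : Matrix (Fin n) (Fin n) ℝ, ∀ hW : W.IsHermitian, A W = 0 → W ≠ 0 →
      r + 1 ≤ negEigCount hW) := by
  constructor
  · intro huniq W hW hAW hW0
    by_contra hlt
    have hle : negEigCount hW ≤ r := by omega
    classical
    set X := ∑ i ∈ Finset.univ.filter (fun i => hW.eigenvalues i < 0),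
        (-hW.eigenvalues i) • vecMulVec (evec hW i) (evec hW i) with hXdef
    set Y := ∑ i ∈ Finset.univ.filter (fun i => ¬ hW.eigenvalues i < 0),
        hW.eigenvalues i • vecMulVec (evec hW i) (evec hW i) with hYdef
    have hXpsd : X.PosSemidef := psd_sum _ _ _ (fun i hi => by
      simp only [Finset.mem_filter] at hi; linarith [hi.2])
    have hYpsd : Y.PosSemidef := psd_sum _ _ _ (fun i hi => by
      simp only [Finset.mem_filter, not_lt] at hi; exact hi.2)
    have hXrank : X.rank ≤ r := le_trans (rank_sum_le _ _ _) hle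
    have hWXY : W + X = Y := decomp hW
    have hA : A Y = A X := by rw [← hWXY, map_add, hAW, zero_add]
    have hYX : Y = X := huniq X hXpsd hXrank Y hYpsd hA
    apply hW0
    have hW' : W = Y - X := by rw [← hWXY]; abel
    rw [hW', hYX, sub_self]
  · intro hnull X hXpsd hXrank Y hYpsd hAeq
    by_cases h0 : Y - X = 0
    · exact sub_eq_zero.mp h0
    have hWH : (Y - X).IsHermitian := hYpsd.1.sub hXpsd.1
    have hAW : A (Y - X) = 0 := by rw [map_sub, hAeq, sub_self]
    have h1 := hnull (Y - X) hWH hAW h0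
    have h2 : negEigCount hWH ≤ X.rank := aux1 hWH hXpsd (by
      have : Y - X + X = Y := by abel
      rw [this]; exact hYpsd)
    omega
end
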